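/- Let A, B be finite nonempty sets of integers with min A = min B = 0, max A = M, max B = N, M ≥ N, and suppose h_A = |[0,M] \ A| ≤ |B| - 2. Then for every x ∈ [1, N] with x ∉ B, either x ∈ A + B or x + M ∈ A + B. -/
import Mathlib


open scoped Pointwise

theorem stmt3 (A B : Finset ℤ) (hA : A.Nonempty) (hB : B.Nonempty) (M N : ℤ)
    (hminA : A.min' hA = 0) (hminB : B.min' hB = 0)
    (hmaxA : A.max' hA = M) (hmaxB : B.max' hB = N) (hMN : N ≤ M)
    (hhole : ((Finset.Icc 0 M \ A).card : ℤ) ≤ (B.card : ℤ) - 2) :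
    ∀ x ∈ Finset.Icc 1 N, x ∉ B → x ∈ A + B ∨ x + M ∈ A + B := by
  intro x hx hxB
  by_contra hcon
  push_neg at hcon
  obtain ⟨h1, h2⟩ := hcon
  simp only [Finset.mem_Icc] at hx
  have hB0 : (0:ℤ) ∈ B := hminB ▸ B.min'_mem hB
  have hBle : ∀ b ∈ B, 0 ≤ b ∧ b ≤ N := fun b hb =>
    ⟨hminB ▸ B.min'_le b hb, hmaxB ▸ B.le_max' b hb⟩
  set f : ℤ → ℤ := fun b => if b < x then x - b else x + M - b with hf
  have hsub : ((B.erase 0).image f) ⊆ Finset.Icc 0 M \ A := by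
    intro y hy
    simp only [Finset.mem_image] at hy
    obtain ⟨b, hb, rfl⟩ := hy
    have hbB : b ∈ B := Finset.mem_of_mem_erase hb
    obtain ⟨hb0, hbN⟩ := hBle b hbB
    simp only [Finset.mem_sdiff, Finset.mem_Icc, hf]
    by_cases hbx : b < x
    · simp only [if_pos hbx]
      refine ⟨⟨by omega, by omega⟩, fun ha => h1 ?_⟩
      have := Finset.add_mem_add ha hbB
      simpa using this
    · simp only [if_neg hbx]
      refine ⟨⟨by omega, by omega⟩, fun ha => h2 ?_⟩
      have := Finset.add_mem_add ha hbB
      have e : x + M - b + b = x + M := by ring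
      rwa [e] at this
  have hinj : Set.InjOn f ((B.erase 0 : Finset ℤ) : Set ℤ) := by
    intro b hb b' hb' hfe
    rw [Finset.mem_coe, Finset.mem_erase] at hb hb'
    obtain ⟨hb0, hbB⟩ := hb
    obtain ⟨hb'0, hb'B⟩ := hb'
    obtain ⟨hbl, hbu⟩ := hBle b hbB
    obtain ⟨hbl', hbu'⟩ := hBle b' hb'B
    simp only [hf] at hfe
    split_ifs at hfe <;> omega
  have hcard1 : ((B.erase 0).image f).card = (B.erase 0).card :=
    Finset.card_image_of_injOn hinj
  have hcard2 : (B.erase 0).card = B.card - 1 := Finset.card_erase_of_mem hB0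
  have hcard3 : ((B.erase 0).image f).card ≤ (Finset.Icc 0 M \ A).card :=
    Finset.card_le_card hsub
  have hBpos : 1 ≤ B.card := Finset.card_pos.mpr hB
  have : (B.card : ℤ) - 1 ≤ ((Finset.Icc 0 M \ A).card : ℤ) := by
    rw [hcard1, hcard2] at hcard3
    omega
  omega
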